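/- Let U ⊆ ℝ^4 be open (ℝ^4 with the Minkowski form η), (ξ, N) a null frame on U, and X, Y : U → ℝ^4 differentiable maps such that at every p ∈ U: η(X p, ξ p) = η(X p, N p) = 0, η(Y p, ξ p) = η(Y p, N p) = 0, η(X p, X p) = 1, η(Y p, Y p) = 1 and η(X p, Y p) = 0 (an orthonormal screen frame). Let f, h : U → ℝ with f differentiable and suppose P_p(D_{X p} X(p)) = h(p) • X(p) for every p. Then the following are equivalent: (1) there exists ψ : U → ℝ such that for every p ∈ U and every screen vector v at p, P_p(fderiv ℝ (q ↦ f q • X q) p v) = ψ(p) • v (i.e., f X is closed conformal for the screen connection); (2) for every p ∈ U: D_{Y p} f(p) = 0 and D_{X p} f(p) + h(p) * f(p) = f(p) * η(D_{Y p} X(p), Y p). (Flat-Minkowski-ambient form of the paper's lemma characterizing when a rescaled screen frame field is closed and conformal on the screen distribution.) -/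

import Mathlib

open scoped BigOperators

noncomputable section

/-- Euclidean space `ℝ^m`. -/
abbrev E (m : ℕ) : Type := EuclideanSpace ℝ (Fin m)

/-- The Minkowski bilinear form `η(x,y) = -(x 0)(y 0) + ∑_{i≥1} (x i)(y i)` on `ℝ^(n+2)`. -/
def eta {n : ℕ} (x y : E (n + 2)) : ℝ :=
  (∑ i, x i * y i) - 2 * (x 0 * y 0)

/-- Screen projection `P_p(w) = w - η(w,N)ξ - η(w,ξ)N` determined by the null frame at a point. -/
def sproj {n : ℕ} (xi N w : E (n + 2)) : E (n + 2) :=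
  w - eta w N • xi - eta w xi • N

/-- Screen shape operator `A*_ξ(p)(v) = -P_p(D_v ξ (p))`. -/
def Astar {n : ℕ} (xi N : E (n + 2) → E (n + 2)) (p v : E (n + 2)) : E (n + 2) :=
  -sproj (xi p) (N p) (fderiv ℝ xi p v)

/-- Shape operator `A_N(p)(v) = -P_p(D_v N (p))`. -/
def AN {n : ℕ} (xi N : E (n + 2) → E (n + 2)) (p v : E (n + 2)) : E (n + 2) :=
  -sproj (xi p) (N p) (fderiv ℝ N p v)

/-- Transversal one-form `τ_p(v) = η(D_v N(p), ξ p)`. -/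
def tau {n : ℕ} (xi N : E (n + 2) → E (n + 2)) (p v : E (n + 2)) : ℝ :=
  eta (fderiv ℝ N p v) (xi p)

/-- Screen part `Z*(p) = P_p(Z p)` of a vector field. -/
def Zstar {n : ℕ} (xi N Z : E (n + 2) → E (n + 2)) (p : E (n + 2)) : E (n + 2) :=
  sproj (xi p) (N p) (Z p)

/-- `A_{Z⊥}(p)(v) = η(Z p, N p) • A*_ξ(p)(v) + η(Z p, ξ p) • A_N(p)(v)`. -/
def AZperp {n : ℕ} (xi N Z : E (n + 2) → E (n + 2)) (p v : E (n + 2)) : E (n + 2) :=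
  eta (Z p) (N p) • Astar xi N p v + eta (Z p) (xi p) • AN xi N p v

lemma eta_symm {n : ℕ} (x y : E (n+2)) : eta x y = eta y x := by
  simp [eta, mul_comm]

lemma eta_add_left {n : ℕ} (x x' y : E (n+2)) : eta (x + x') y = eta x y + eta x' y := by
  simp [eta, add_mul, Finset.sum_add_distrib]; ring

lemma eta_smul_left {n : ℕ} (a : ℝ) (x y : E (n+2)) : eta (a • x) y = a * eta x y := by
  simp [eta, smul_eq_mul, mul_assoc, ← Finset.mul_sum]; ring

lemma eta_sub_left {n : ℕ} (x x' y : E (n+2)) : eta (x - x') y = eta x y - eta x' y := by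
  simp [eta, sub_mul, Finset.sum_sub_distrib]; ring

lemma eta_zero_left {n : ℕ} (y : E (n+2)) : eta 0 y = 0 := by simp [eta]

lemma eta_smul_add {n : ℕ} (a b : ℝ) (x y z : E (n+2)) :
    eta (a • x + b • y) z = a * eta x z + b * eta y z := by
  rw [eta_add_left, eta_smul_left, eta_smul_left]

lemma eta_inner (x y : E 4) : eta x y = (inner ℝ x y : ℝ) - 2 * (x 0 * y 0) := by
  simp [eta, PiLp.inner_apply, RCLike.inner_apply, mul_comm]

lemma eta_sproj {n : ℕ} (ξ N w u : E (n+2)) :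
    eta (sproj ξ N w) u = eta w u - eta w N * eta ξ u - eta w ξ * eta N u := by
  simp [sproj, eta_sub_left, eta_smul_left]

lemma fderiv_eta_apply {F G : E 4 → E 4} {p : E 4} (hF : DifferentiableAt ℝ F p)
    (hG : DifferentiableAt ℝ G p) (v : E 4) :
    fderiv ℝ (fun q => eta (F q) (G q)) p v
      = eta (fderiv ℝ F p v) (G p) + eta (F p) (fderiv ℝ G p v) := by
  set π : E 4 →L[ℝ] ℝ := EuclideanSpace.proj (0 : Fin 4) with hπ
  have hF0 : DifferentiableAt ℝ (fun q => F q 0) p := π.differentiableAt.comp p hF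
  have hG0 : DifferentiableAt ℝ (fun q => G q 0) p := π.differentiableAt.comp p hG
  have hFi : DifferentiableAt ℝ (fun q => (inner ℝ (F q) (G q) : ℝ)) p := hF.inner ℝ hG
  have key : (fun q => eta (F q) (G q))
      = fun q => (inner ℝ (F q) (G q) : ℝ) - 2 * (F q 0 * G q 0) := by
    funext q; exact eta_inner _ _
  have hF0' : fderiv ℝ (fun q => F q 0) p = π.comp (fderiv ℝ F p) :=
    (π.hasFDerivAt.comp p hF.hasFDerivAt).fderiv
  have hG0' : fderiv ℝ (fun q => G q 0) p = π.comp (fderiv ℝ G p) :=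
    (π.hasFDerivAt.comp p hG.hasFDerivAt).fderiv
  rw [key, fderiv_fun_sub hFi (by fun_prop), fderiv_const_mul (a := fun q => F q 0 * G q 0) (hF0.mul hG0)]
  simp only [ContinuousLinearMap.sub_apply, ContinuousLinearMap.smul_apply,
    fderiv_fun_mul hF0 hG0, fderiv_inner_apply ℝ hF hG v, ContinuousLinearMap.add_apply,
    ContinuousLinearMap.smul_apply, hF0', hG0', ContinuousLinearMap.coe_comp',
    Function.comp_apply, smul_eq_mul, hπ, PiLp.proj_apply]
  rw [eta_inner, eta_inner]
  ring

lemma eta_nondeg (ξ N X Y : E 4)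
    (hξξ : eta ξ ξ = 0) (hNN : eta N N = 0) (hξN : eta ξ N = 1)
    (hXξ : eta X ξ = 0) (hXN : eta X N = 0)
    (hYξ : eta Y ξ = 0) (hYN : eta Y N = 0)
    (hXX : eta X X = 1) (hYY : eta Y Y = 1) (hXY : eta X Y = 0)
    (w : E 4) (h1 : eta w ξ = 0) (h2 : eta w N = 0) (h3 : eta w X = 0) (h4 : eta w Y = 0) :
    w = 0 := by
  set b : Fin 4 → E 4 := ![ξ, N, X, Y] with hb
  have pair : ∀ (g : Fin 4 → ℝ) (u : E 4), eta (∑ i, g i • b i) u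
      = g 0 * eta ξ u + g 1 * eta N u + g 2 * eta X u + g 3 * eta Y u := by
    intro g u
    rw [Fin.sum_univ_four]
    simp [hb, eta_add_left, eta_smul_left]
  have li : LinearIndependent ℝ b := by
    rw [Fintype.linearIndependent_iff]
    intro g hg i
    have e1 := congrArg (fun z => eta z N) hg
    have e2 := congrArg (fun z => eta z ξ) hg
    have e3 := congrArg (fun z => eta z X) hg
    have e4 := congrArg (fun z => eta z Y) hg
    simp only [pair] at e1 e2 e3 e4
    rw [show eta (0 : E 4) N = 0 by simp [eta]] at e1
    rw [show eta (0 : E 4) ξ = 0 by simp [eta]] at e2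
    rw [show eta (0 : E 4) X = 0 by simp [eta]] at e3
    rw [show eta (0 : E 4) Y = 0 by simp [eta]] at e4
    rw [hξN, hNN, hXN, hYN] at e1
    rw [hξξ, eta_symm N ξ, hξN, hXξ, hYξ] at e2
    rw [eta_symm ξ X, hXξ, eta_symm N X, hXN, hXX, eta_symm Y X, hXY] at e3
    rw [eta_symm ξ Y, hYξ, eta_symm N Y, hYN, hXY, hYY] at e4
    fin_cases i <;> simp <;> linarith
  have hcard : Fintype.card (Fin 4) = Module.finrank ℝ (E 4) := by
    simp [finrank_euclideanSpace_fin]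
  let B := basisOfLinearIndependentOfCardEqFinrank li hcard
  have hBco : ⇑B = b := coe_basisOfLinearIndependentOfCardEqFinrank li hcard
  have hw : w = ∑ i, B.repr w i • b i := by
    conv_lhs => rw [← B.sum_repr w]
    simp [hBco]
  have e1 := h2; have e2 := h1; have e3 := h3; have e4 := h4
  rw [hw, pair] at e1 e2 e3 e4
  rw [hξN, hNN, hXN, hYN] at e1
  rw [hξξ, eta_symm N ξ, hξN, hXξ, hYξ] at e2
  rw [eta_symm ξ X, hXξ, eta_symm N X, hXN, hXX, eta_symm Y X, hXY] at e3
  rw [eta_symm ξ Y, hYξ, eta_symm N Y, hYN, hXY, hYY] at e4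
  rw [hw, Fin.sum_univ_four]
  have g0 : B.repr w 0 = 0 := by linarith
  have g1 : B.repr w 1 = 0 := by linarith
  have g2 : B.repr w 2 = 0 := by linarith
  have g3 : B.repr w 3 = 0 := by linarith
  rw [g0, g1, g2, g3]
  simp

/-- Characterization of when a rescaled screen frame field `f X` is closed
and conformal for the screen connection, given an orthonormal screen frame `{X, Y}` with
`∇*_X X = h X` (flat Minkowski ambient form). -/
theorem rescaled_screen_field_cc_iff
    (U : Set (E 4)) (hU : IsOpen U)
    (ξ N X Y : E 4 → E 4) (f h : E 4 → ℝ)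
    (hξd : ∀ p ∈ U, DifferentiableAt ℝ ξ p)
    (hNd : ∀ p ∈ U, DifferentiableAt ℝ N p)
    (hXd : ∀ p ∈ U, DifferentiableAt ℝ X p)
    (hYd : ∀ p ∈ U, DifferentiableAt ℝ Y p)
    (hfd : ∀ p ∈ U, DifferentiableAt ℝ f p)
    (hξξ : ∀ p ∈ U, eta (ξ p) (ξ p) = 0)
    (hNN : ∀ p ∈ U, eta (N p) (N p) = 0)
    (hξN : ∀ p ∈ U, eta (ξ p) (N p) = 1)
    (hXξ : ∀ p ∈ U, eta (X p) (ξ p) = 0) (hXN : ∀ p ∈ U, eta (X p) (N p) = 0)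
    (hYξ : ∀ p ∈ U, eta (Y p) (ξ p) = 0) (hYN : ∀ p ∈ U, eta (Y p) (N p) = 0)
    (hXX : ∀ p ∈ U, eta (X p) (X p) = 1)
    (hYY : ∀ p ∈ U, eta (Y p) (Y p) = 1)
    (hXY : ∀ p ∈ U, eta (X p) (Y p) = 0)
    (hXXgeo : ∀ p ∈ U, sproj (ξ p) (N p) (fderiv ℝ X p (X p)) = h p • X p) :
    (∃ ψ : E 4 → ℝ, ∀ p ∈ U, ∀ v : E 4, eta v (ξ p) = 0 → eta v (N p) = 0 →
        sproj (ξ p) (N p) (fderiv ℝ (fun q => f q • X q) p v) = ψ p • v) ↔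
    (∀ p ∈ U,
      fderiv ℝ f p (Y p) = 0 ∧
      fderiv ℝ f p (X p) + h p * f p = f p * eta (fderiv ℝ X p (Y p)) (Y p)) := by
  -- some convenient facts at each point of U
  have hconst : ∀ p ∈ U, ∀ v : E 4, eta (fderiv ℝ X p v) (X p) = 0 := by
    intro p hp v
    have heq : (fun q => eta (X q) (X q)) =ᶠ[nhds p] (fun _ => (1 : ℝ)) := by
      filter_upwards [hU.mem_nhds hp] with q hq using hXX q hq
    have h0 : fderiv ℝ (fun q => eta (X q) (X q)) p = 0 := by
      rw [heq.fderiv_eq]; exact fderiv_const_apply 1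
    have h1 := fderiv_eta_apply (hXd p hp) (hXd p hp) v
    rw [h0] at h1
    simp only [ContinuousLinearMap.zero_apply] at h1
    rw [eta_symm (X p) (fderiv ℝ X p v)] at h1
    linarith
  have hfX : ∀ p ∈ U, ∀ v : E 4, fderiv ℝ (fun q => f q • X q) p v
      = f p • fderiv ℝ X p v + fderiv ℝ f p v • X p := by
    intro p hp v
    rw [fderiv_fun_smul (hfd p hp) (hXd p hp)]
    simp [ContinuousLinearMap.add_apply, ContinuousLinearMap.smul_apply,
      ContinuousLinearMap.smulRight_apply]
  have hzero : ∀ p ∈ U, h p = 0 := by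
    intro p hp
    have e := congrArg (fun z => eta z (X p)) (hXXgeo p hp)
    simp only [eta_sproj, eta_smul_left] at e
    rw [hconst p hp (X p), hXX p hp, eta_symm (ξ p) (X p), hXξ p hp,
      eta_symm (N p) (X p), hXN p hp] at e
    simpa using e.symm
  have hXXY : ∀ p ∈ U, eta (fderiv ℝ X p (X p)) (Y p) = 0 := by
    intro p hp
    have e := congrArg (fun z => eta z (Y p)) (hXXgeo p hp)
    simp only [eta_sproj, eta_smul_left] at e
    rw [eta_symm (ξ p) (Y p), hYξ p hp, eta_symm (N p) (Y p), hYN p hp,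
      hXY p hp] at e
    simpa using e
  have hexp : ∀ p ∈ U, ∀ v u : E 4,
      eta (sproj (ξ p) (N p) (fderiv ℝ (fun q => f q • X q) p v)) u
        = (f p * eta (fderiv ℝ X p v) u + fderiv ℝ f p v * eta (X p) u)
          - (f p * eta (fderiv ℝ X p v) (N p) + fderiv ℝ f p v * eta (X p) (N p)) * eta (ξ p) u
          - (f p * eta (fderiv ℝ X p v) (ξ p) + fderiv ℝ f p v * eta (X p) (ξ p)) * eta (N p) u := by
    intro p hp v u
    rw [eta_sproj, hfX p hp v, eta_smul_add, eta_smul_add, eta_smul_add]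
  constructor
  · rintro ⟨ψ, hψ⟩ p hp
    have e1 := hψ p hp (Y p) (hYξ p hp) (hYN p hp)
    have p1 := congrArg (fun z => eta z (X p)) e1
    have p2 := congrArg (fun z => eta z (Y p)) e1
    simp only [hexp p hp, eta_smul_left] at p1 p2
    rw [hconst p hp (Y p), hXX p hp, eta_symm (ξ p) (X p), hXξ p hp,
      eta_symm (N p) (X p), hXN p hp, eta_symm (Y p) (X p), hXY p hp] at p1
    have hfY : fderiv ℝ f p (Y p) = 0 := by simpa using p1
    rw [hXY p hp, eta_symm (ξ p) (Y p), hYξ p hp, eta_symm (N p) (Y p), hYN p hp,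
      hYY p hp, hfY] at p2
    have hψval : ψ p = f p * eta (fderiv ℝ X p (Y p)) (Y p) := by
      rw [mul_one] at p2; linarith [p2]
    have e2 := hψ p hp (X p) (hXξ p hp) (hXN p hp)
    have p3 := congrArg (fun z => eta z (X p)) e2
    simp only [hexp p hp, eta_smul_left] at p3
    rw [hconst p hp (X p), hXX p hp, eta_symm (ξ p) (X p), hXξ p hp,
      eta_symm (N p) (X p), hXN p hp] at p3
    refine ⟨hfY, ?_⟩
    rw [hzero p hp, zero_mul, add_zero, ← hψval]
    simpa using p3
  · intro H
    refine ⟨fun p => fderiv ℝ f p (X p), ?_⟩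
    intro p hp v hvξ hvN
    obtain ⟨hfY, hfX2⟩ := H p hp
    have hψval : fderiv ℝ f p (X p) = f p * eta (fderiv ℝ X p (Y p)) (Y p) := by
      rw [hzero p hp] at hfX2; linarith
    set a := eta v (X p) with ha
    set b := eta v (Y p) with hb
    have hv : v = a • X p + b • Y p := by
      have hzero' : v - (a • X p + b • Y p) = 0 := by
        apply eta_nondeg (ξ p) (N p) (X p) (Y p) (hξξ p hp) (hNN p hp) (hξN p hp)
          (hXξ p hp) (hXN p hp) (hYξ p hp) (hYN p hp) (hXX p hp) (hYY p hp) (hXY p hp)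
        · rw [eta_sub_left, eta_smul_add, hvξ, hXξ p hp, hYξ p hp]; ring
        · rw [eta_sub_left, eta_smul_add, hvN, hXN p hp, hYN p hp]; ring
        · rw [eta_sub_left, eta_smul_add, hXX p hp, eta_symm (Y p) (X p), hXY p hp, ← ha]; ring
        · rw [eta_sub_left, eta_smul_add, hXY p hp, hYY p hp, ← hb]; ring
      have := sub_eq_zero.mp hzero'
      exact this
    have hDfv : fderiv ℝ f p v = a * fderiv ℝ f p (X p) := by
      conv_lhs => rw [hv]
      rw [map_add, map_smul, map_smul, hfY]
      simp
    have hDXv : fderiv ℝ X p v = a • fderiv ℝ X p (X p) + b • fderiv ℝ X p (Y p) := by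
      conv_lhs => rw [hv]
      rw [map_add, map_smul, map_smul]
    have goal0 : sproj (ξ p) (N p) (fderiv ℝ (fun q => f q • X q) p v)
        - fderiv ℝ f p (X p) • v = 0 := by
      apply eta_nondeg (ξ p) (N p) (X p) (Y p) (hξξ p hp) (hNN p hp) (hξN p hp)
        (hXξ p hp) (hXN p hp) (hYξ p hp) (hYN p hp) (hXX p hp) (hYY p hp) (hXY p hp)
      · rw [eta_sub_left, eta_smul_left, hvξ, hexp p hp, hξξ p hp, eta_symm (N p) (ξ p),
          hξN p hp, hXξ p hp]
        ring
      · rw [eta_sub_left, eta_smul_left, hvN, hexp p hp, hξN p hp, hNN p hp, hXN p hp]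
        ring
      · rw [eta_sub_left, eta_smul_left, ← ha, hexp p hp, hconst p hp v, hXX p hp,
          eta_symm (ξ p) (X p), hXξ p hp, eta_symm (N p) (X p), hXN p hp, hDfv]
        ring
      · rw [eta_sub_left, eta_smul_left, ← hb, hexp p hp, hXY p hp,
          eta_symm (ξ p) (Y p), hYξ p hp, eta_symm (N p) (Y p), hYN p hp, hDXv,
          eta_smul_add, hXXY p hp, hDfv, hψval]
        ring
    have := sub_eq_zero.mp goal0
    exact this

end
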